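/- Lebourg mean value theorem: if Φ : X → ℝ is locally Lipschitz and x ≠ y in X, then there exist τ ∈ (0,1) and ξ ∈ ∂Φ(x + τ(y−x)) such that Φ(y) − Φ(x) = ⟨ξ, y−x⟩. -/

import Mathlib

open Filter Topology Set

/-- Clarke generalized directional derivative of `Φ` at `x` in direction `v`. -/
noncomputable def clarkeDeriv {X : Type*} [NormedAddCommGroup X] [NormedSpace ℝ X]
    (Φ : X → ℝ) (x v : X) : ℝ :=
  limsup (fun p : X × ℝ => (Φ (p.1 + p.2 • v) - Φ p.1) / p.2) ((𝓝 x) ×ˢ (𝓝[>] (0:ℝ)))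

/-- Clarke subdifferential of `Φ` at `x`. -/
def clarkeSubdiff {X : Type*} [NormedAddCommGroup X] [NormedSpace ℝ X]
    (Φ : X → ℝ) (x : X) : Set (X →L[ℝ] ℝ) :=
  {f | ∀ v, f v ≤ clarkeDeriv Φ x v}

section aux
variable {X : Type*} [NormedAddCommGroup X] [NormedSpace ℝ X] {Φ : X → ℝ} {z : X}
  {K : NNReal} {ε : ℝ}

lemma q_abs_bound (hε : 0 < ε) (hK : LipschitzOnWith K Φ (Metric.ball z ε)) (v : X) :
    ∀ᶠ p in (𝓝 z) ×ˢ (𝓝[>] (0:ℝ)),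
      |(Φ (p.1 + p.2 • v) - Φ p.1) / p.2| ≤ (K : ℝ) * ‖v‖ := by
  have h1 : Metric.ball z (ε/2) ∈ 𝓝 z := Metric.ball_mem_nhds z (by linarith)
  have h2 : Ioo (0:ℝ) (ε / (2 * (‖v‖ + 1))) ∈ 𝓝[>] (0:ℝ) := by
    refine Ioo_mem_nhdsGT_of_mem ?_
    exact ⟨le_refl _, by positivity⟩
  filter_upwards [prod_mem_prod h1 h2] with p hp
  obtain ⟨hp1, hp2⟩ := hp
  have hv1 : 0 ≤ ‖v‖ := norm_nonneg v
  have ht : 0 < p.2 := hp2.1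
  have htv : p.2 * ‖v‖ < ε / 2 := by
    calc p.2 * ‖v‖ ≤ p.2 * (‖v‖ + 1) := by nlinarith
    _ < (ε / (2 * (‖v‖ + 1))) * (‖v‖ + 1) := by
        apply mul_lt_mul_of_pos_right hp2.2; positivity
    _ = ε / 2 := by field_simp
  have hmem1 : p.1 ∈ Metric.ball z ε := by
    have := Metric.mem_ball.1 hp1; exact Metric.mem_ball.2 (by linarith)
  have hmem2 : p.1 + p.2 • v ∈ Metric.ball z ε := by
    rw [Metric.mem_ball] at hp1 ⊢
    calc dist (p.1 + p.2 • v) z ≤ dist (p.1 + p.2 • v) p.1 + dist p.1 z := dist_triangle _ _ _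
    _ = ‖p.2 • v‖ + dist p.1 z := by rw [dist_self_add_left]
    _ < ε := by
        rw [norm_smul, Real.norm_eq_abs, abs_of_pos ht]; linarith
  have hd := hK.dist_le_mul _ hmem2 _ hmem1
  rw [Real.dist_eq, dist_self_add_left, norm_smul, Real.norm_eq_abs, abs_of_pos ht] at hd
  rw [abs_div, abs_of_pos ht, div_le_iff₀ ht]
  calc |Φ (p.1 + p.2 • v) - Φ p.1| ≤ K * (p.2 * ‖v‖) := hd
  _ = (K : ℝ) * ‖v‖ * p.2 := by ring

lemma q_bddAbove (hε : 0 < ε) (hK : LipschitzOnWith K Φ (Metric.ball z ε)) (v : X) :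
    IsBoundedUnder (· ≤ ·) ((𝓝 z) ×ˢ (𝓝[>] (0:ℝ)))
      (fun p : X × ℝ => (Φ (p.1 + p.2 • v) - Φ p.1) / p.2) :=
  ⟨(K : ℝ) * ‖v‖, eventually_map.2 <| (q_abs_bound hε hK v).mono fun _ h => (abs_le.1 h).2⟩

lemma q_bddBelow (hε : 0 < ε) (hK : LipschitzOnWith K Φ (Metric.ball z ε)) (v : X) :
    IsBoundedUnder (· ≥ ·) ((𝓝 z) ×ˢ (𝓝[>] (0:ℝ)))
      (fun p : X × ℝ => (Φ (p.1 + p.2 • v) - Φ p.1) / p.2) :=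
  ⟨-((K : ℝ) * ‖v‖), eventually_map.2 <| (q_abs_bound hε hK v).mono fun _ h => (abs_le.1 h).1⟩

lemma clarkeDeriv_le (hε : 0 < ε) (hK : LipschitzOnWith K Φ (Metric.ball z ε)) (v : X) :
    clarkeDeriv Φ z v ≤ (K : ℝ) * ‖v‖ :=
  limsup_le_of_le ((q_bddBelow hε hK v).isCoboundedUnder_le)
    ((q_abs_bound hε hK v).mono fun _ h => (abs_le.1 h).2)

lemma le_clarkeDeriv_of_curve (hε : 0 < ε) (hK : LipschitzOnWith K Φ (Metric.ball z ε))
    {v : X} {c : ℝ} {u : ℝ → X} (hu : Tendsto u (𝓝[>] (0:ℝ)) (𝓝 z))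
    (h : ∀ᶠ t in 𝓝[>] (0:ℝ), c ≤ (Φ (u t + t • v) - Φ (u t)) / t) :
    c ≤ clarkeDeriv Φ z v := by
  have hm : Tendsto (fun t => (u t, t)) (𝓝[>] (0:ℝ)) ((𝓝 z) ×ˢ (𝓝[>] (0:ℝ))) :=
    hu.prodMk tendsto_id
  exact le_limsup_of_frequently_le (hm.frequently h.frequently) (q_bddAbove hε hK v)

lemma q_ev_lt (hε : 0 < ε) (hK : LipschitzOnWith K Φ (Metric.ball z ε)) (v : X)
    {δ : ℝ} (hδ : 0 < δ) :
    ∀ᶠ p in (𝓝 z) ×ˢ (𝓝[>] (0:ℝ)),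
      (Φ (p.1 + p.2 • v) - Φ p.1) / p.2 < clarkeDeriv Φ z v + δ :=
  eventually_lt_of_limsup_lt (lt_add_of_pos_right _ hδ) (q_bddAbove hε hK v)

lemma m_tendsto (w : X) :
    Tendsto (fun p : X × ℝ => (p.1 + p.2 • w, p.2)) ((𝓝 z) ×ˢ (𝓝[>] (0:ℝ)))
      ((𝓝 z) ×ˢ (𝓝[>] (0:ℝ))) := by
  refine Tendsto.prodMk ?_ tendsto_snd
  have h2 : Tendsto (fun p : X × ℝ => p.2 • w) ((𝓝 z) ×ˢ (𝓝[>] (0:ℝ))) (𝓝 ((0:ℝ) • w)) :=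
    (tendsto_snd.mono_right nhdsWithin_le_nhds).smul_const w
  have := (tendsto_fst (f := 𝓝 z) (g := 𝓝[>] (0:ℝ))).add h2
  simpa using this

lemma clarkeDeriv_add_le (hε : 0 < ε) (hK : LipschitzOnWith K Φ (Metric.ball z ε)) (v w : X) :
    clarkeDeriv Φ z (v + w) ≤ clarkeDeriv Φ z v + clarkeDeriv Φ z w := by
  refine le_of_forall_pos_le_add fun δ hδ => ?_
  have hδ2 : 0 < δ/2 := by linarith
  have h1 := (m_tendsto (z := z) (X := X) w).eventually (q_ev_lt hε hK v hδ2)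
  have h2 := q_ev_lt hε hK w hδ2
  refine limsup_le_of_le (q_bddBelow hε hK (v + w)).isCoboundedUnder_le ?_
  filter_upwards [h1, h2] with p h1 h2
  have harg : p.1 + p.2 • (v + w) = p.1 + p.2 • w + p.2 • v := by
    rw [smul_add]; abel
  have key : (Φ (p.1 + p.2 • (v + w)) - Φ p.1) / p.2
      = (Φ (p.1 + p.2 • w + p.2 • v) - Φ (p.1 + p.2 • w)) / p.2
        + (Φ (p.1 + p.2 • w) - Φ p.1) / p.2 := by
    rw [← add_div, sub_add_sub_cancel, harg]
  rw [key]
  linarith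

lemma mul_tendsto {s : ℝ} (hs : 0 < s) :
    Tendsto (fun p : X × ℝ => (p.1, p.2 * s)) ((𝓝 z) ×ˢ (𝓝[>] (0:ℝ)))
      ((𝓝 z) ×ˢ (𝓝[>] (0:ℝ))) := by
  have hts : Tendsto (fun t : ℝ => t * s) (𝓝[>] (0:ℝ)) (𝓝[>] (0:ℝ)) := by
    rw [tendsto_nhdsWithin_iff]
    constructor
    · have := ((continuous_mul_right s).tendsto (0:ℝ)).mono_left
        (nhdsWithin_le_nhds : 𝓝[>] (0:ℝ) ≤ 𝓝 0)
      simpa using this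
    · filter_upwards [self_mem_nhdsWithin] with t ht
      exact mul_pos ht hs
  exact Tendsto.prodMk tendsto_fst (hts.comp tendsto_snd)

lemma clarkeDeriv_smul_le (hε : 0 < ε) (hK : LipschitzOnWith K Φ (Metric.ball z ε))
    (v : X) {s : ℝ} (hs : 0 < s) :
    clarkeDeriv Φ z (s • v) ≤ s * clarkeDeriv Φ z v := by
  refine le_of_forall_pos_le_add fun δ hδ => ?_
  have hδ' : 0 < δ / s := by positivity
  have h1 := (mul_tendsto (z := z) (X := X) hs).eventually (q_ev_lt hε hK v hδ')
  refine limsup_le_of_le (q_bddBelow hε hK (s • v)).isCoboundedUnder_le ?_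
  have hpos : ∀ᶠ p : X × ℝ in (𝓝 z) ×ˢ (𝓝[>] (0:ℝ)), 0 < p.2 :=
    (eventually_nhdsWithin_of_forall (fun t ht => ht) : ∀ᶠ t : ℝ in 𝓝[>] 0, 0 < t).prod_inr (𝓝 z)
  filter_upwards [h1, hpos] with p h1 hp
  have key : (Φ (p.1 + p.2 • (s • v)) - Φ p.1) / p.2
      = s * ((Φ (p.1 + (p.2 * s) • v) - Φ p.1) / (p.2 * s)) := by
    rw [← mul_smul]
    field_simp
  rw [key]
  have hle : (Φ (p.1 + (p.2 * s) • v) - Φ p.1) / (p.2 * s)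
      ≤ clarkeDeriv Φ z v + δ / s := le_of_lt h1
  calc s * ((Φ (p.1 + (p.2 * s) • v) - Φ p.1) / (p.2 * s))
      ≤ s * (clarkeDeriv Φ z v + δ / s) := by nlinarith
  _ = s * clarkeDeriv Φ z v + δ := by field_simp

lemma clarkeDeriv_smul (hε : 0 < ε) (hK : LipschitzOnWith K Φ (Metric.ball z ε))
    (v : X) {s : ℝ} (hs : 0 < s) :
    clarkeDeriv Φ z (s • v) = s * clarkeDeriv Φ z v := by
  refine le_antisymm (clarkeDeriv_smul_le hε hK v hs) ?_
  have h := clarkeDeriv_smul_le hε hK (s • v) (inv_pos.2 hs)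
  rw [inv_smul_smul₀ hs.ne'] at h
  have := mul_le_mul_of_nonneg_left h hs.le
  calc s * clarkeDeriv Φ z v ≤ s * (s⁻¹ * clarkeDeriv Φ z (s • v)) := this
  _ = clarkeDeriv Φ z (s • v) := by field_simp

lemma clarkeDeriv_zero : clarkeDeriv Φ z (0 : X) = 0 := by
  have h : (fun p : X × ℝ => (Φ (p.1 + p.2 • (0:X)) - Φ p.1) / p.2) = fun _ => (0:ℝ) := by
    funext p; simp
  rw [clarkeDeriv, h, limsup_const]

/-- Hahn–Banach step: from the two directional lower bounds produce the subgradient. -/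
lemma exists_subgradient (hε : 0 < ε) (hK : LipschitzOnWith K Φ (Metric.ball z ε))
    {v : X} (hv : v ≠ 0) {c : ℝ}
    (h1 : c ≤ clarkeDeriv Φ z v) (h2 : -c ≤ clarkeDeriv Φ z (-v)) :
    ∃ ξ ∈ clarkeSubdiff Φ z, ξ v = c := by
  set N : X → ℝ := clarkeDeriv Φ z with hN
  have N_hom : ∀ s : ℝ, 0 < s → ∀ w, N (s • w) = s * N w := fun s hs w =>
    clarkeDeriv_smul hε hK w hs
  have N_add : ∀ w₁ w₂, N (w₁ + w₂) ≤ N w₁ + N w₂ := fun w₁ w₂ =>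
    clarkeDeriv_add_le hε hK w₁ w₂
  set f : X →ₗ.[ℝ] ℝ := LinearPMap.mkSpanSingleton (K := ℝ) v c hv with hf
  have hfN : ∀ p : f.domain, f p ≤ N p := by
    rintro ⟨w, hw⟩
    obtain ⟨t, rfl⟩ := Submodule.mem_span_singleton.1 hw
    rw [LinearPMap.mkSpanSingleton'_apply, RingHom.id_apply]
    rcases lt_trichotomy t 0 with ht | rfl | ht
    · have hvv : t • v = (-t) • (-v) := by rw [smul_neg, neg_smul, neg_neg]
      have := mul_le_mul_of_nonneg_left h2 (neg_pos.2 ht).le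
      calc t • c = (-t) * (-c) := by rw [smul_eq_mul]; ring
      _ ≤ (-t) * clarkeDeriv Φ z (-v) := this
      _ = N ((-t) • (-v)) := (N_hom (-t) (neg_pos.2 ht) (-v)).symm
      _ = N (t • v) := by rw [← hvv]
    · simp only [zero_smul, smul_eq_mul, zero_mul]
      rw [hN, clarkeDeriv_zero]
    · have := mul_le_mul_of_nonneg_left h1 ht.le
      calc t • c = t * c := smul_eq_mul ..
      _ ≤ t * clarkeDeriv Φ z v := this
      _ = N (t • v) := (N_hom t ht v).symm
  obtain ⟨g, hg_eq, hg_le⟩ := exists_extension_of_le_sublinear f N N_hom N_add hfN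
  have hgv : g v = c := by
    have := hg_eq ⟨v, Submodule.mem_span_singleton_self v⟩
    rwa [LinearPMap.mkSpanSingleton_apply] at this
  have hbound : ∀ w, ‖g w‖ ≤ (K : ℝ) * ‖w‖ := by
    intro w
    rw [Real.norm_eq_abs, abs_le]
    constructor
    · have := (hg_le (-w)).trans (clarkeDeriv_le hε hK (-w))
      rw [map_neg, norm_neg] at this
      linarith
    · exact (hg_le w).trans (clarkeDeriv_le hε hK w)
  refine ⟨LinearMap.mkContinuous g (K : ℝ) hbound, fun w => ?_, hgv⟩
  exact hg_le w

end aux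

theorem lebourg_mean_value {X : Type*} [NormedAddCommGroup X] [NormedSpace ℝ X]
    (Φ : X → ℝ) (hΦ : LocallyLipschitz Φ) (x y : X) (hxy : x ≠ y) :
    ∃ τ ∈ Set.Ioo (0:ℝ) 1, ∃ ξ ∈ clarkeSubdiff Φ (x + τ • (y - x)),
      Φ y - Φ x = ξ (y - x) := by
  set v := y - x with hv_def
  have hv : v ≠ 0 := sub_ne_zero.2 (Ne.symm hxy)
  set c := Φ y - Φ x with hc_def
  set g : ℝ → ℝ := fun t => Φ (x + t • v) - t * c with hg_def
  have hgc : Continuous g := by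
    have hline : Continuous fun t : ℝ => x + t • v := by continuity
    exact (hΦ.continuous.comp hline).sub (continuous_id.mul continuous_const)
  have hg0 : g 0 = Φ x := by simp [hg_def]
  have hg1 : g 1 = Φ x := by
    have h1 : x + (1:ℝ) • v = y := by rw [one_smul, hv_def]; abel
    simp only [hg_def, h1, one_mul, hc_def]; ring
  obtain ⟨a, haI, haMax⟩ := isCompact_Icc.exists_isMaxOn
    (Set.nonempty_Icc.2 zero_le_one) hgc.continuousOn
  obtain ⟨b, hbI, hbMin⟩ := isCompact_Icc.exists_isMinOn
    (Set.nonempty_Icc.2 zero_le_one) hgc.continuousOn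
  have key : ∃ τ ∈ Ioo (0:ℝ) 1,
      (∀ᶠ t in 𝓝[>] (0:ℝ), g (τ + t) ≤ g τ ∧ g (τ - t) ≤ g τ) ∨
      (∀ᶠ t in 𝓝[>] (0:ℝ), g τ ≤ g (τ + t) ∧ g τ ≤ g (τ - t)) := by
    by_cases ha : a ∈ Ioo (0:ℝ) 1
    · refine ⟨a, ha, Or.inl ?_⟩
      have hmem : Ioo (0:ℝ) (min a (1 - a)) ∈ 𝓝[>] (0:ℝ) :=
        Ioo_mem_nhdsGT_of_mem ⟨le_refl _, lt_min ha.1 (by linarith [ha.2])⟩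
      filter_upwards [hmem] with t ht
      have h1 := lt_min_iff.1 ht.2
      exact ⟨haMax ⟨by linarith [ha.1, ht.1], by linarith [h1.2]⟩,
             haMax ⟨by linarith [h1.1], by linarith [ha.2, ht.1]⟩⟩
    · by_cases hb : b ∈ Ioo (0:ℝ) 1
      · refine ⟨b, hb, Or.inr ?_⟩
        have hmem : Ioo (0:ℝ) (min b (1 - b)) ∈ 𝓝[>] (0:ℝ) :=
          Ioo_mem_nhdsGT_of_mem ⟨le_refl _, lt_min hb.1 (by linarith [hb.2])⟩
        filter_upwards [hmem] with t ht
        have h1 := lt_min_iff.1 ht.2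
        exact ⟨hbMin ⟨by linarith [hb.1, ht.1], by linarith [h1.2]⟩,
               hbMin ⟨by linarith [h1.1], by linarith [hb.2, ht.1]⟩⟩
      · have hend : ∀ s ∈ Icc (0:ℝ) 1, s ∉ Ioo (0:ℝ) 1 → g s = Φ x := by
          intro s hs hns
          rcases eq_or_lt_of_le hs.1 with h | h
          · rw [← h]; exact hg0
          · have hs1 : s = 1 := le_antisymm hs.2
              (by by_contra hlt; exact hns ⟨h, lt_of_not_ge hlt⟩)
            rw [hs1]; exact hg1
        have hga : g a = Φ x := hend a haI ha
        have hgb : g b = Φ x := hend b hbI hb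
        have hconst : ∀ s ∈ Icc (0:ℝ) 1, g s = Φ x := fun s hs =>
          le_antisymm (hga ▸ haMax hs) (hgb ▸ hbMin hs)
        refine ⟨1/2, by norm_num, Or.inl ?_⟩
        have hmem : Ioo (0:ℝ) (1/2) ∈ 𝓝[>] (0:ℝ) :=
          Ioo_mem_nhdsGT_of_mem ⟨le_refl _, by norm_num⟩
        filter_upwards [hmem] with t ht
        have e1 : g (1/2 + t) = Φ x := hconst _ ⟨by linarith [ht.1], by linarith [ht.2]⟩
        have e2 : g (1/2 - t) = Φ x := hconst _ ⟨by linarith [ht.2], by linarith [ht.1]⟩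
        have e3 : g (1/2) = Φ x := hconst _ ⟨by norm_num, by norm_num⟩
        rw [e1, e2, e3]
        exact ⟨le_refl _, le_refl _⟩
  obtain ⟨τ, hτ, hcase⟩ := key
  set z := x + τ • v with hz_def
  obtain ⟨K, t0, ht0, hK0⟩ := hΦ z
  obtain ⟨ε, hε, hball⟩ := Metric.mem_nhds_iff.1 ht0
  have hK : LipschitzOnWith K Φ (Metric.ball z ε) := hK0.mono hball
  have htpos : ∀ᶠ t : ℝ in 𝓝[>] 0, 0 < t := eventually_nhdsWithin_of_forall fun t ht => ht
  have eplus : ∀ t : ℝ, x + (τ + t) • v = z + t • v := by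
    intro t; rw [hz_def, add_smul]; abel
  have eminus : ∀ t : ℝ, x + (τ - t) • v = z - t • v := by
    intro t; rw [hz_def, sub_smul]; abel
  have hmain : c ≤ clarkeDeriv Φ z v ∧ -c ≤ clarkeDeriv Φ z (-v) := by
    rcases hcase with hev | hev
    · -- local max at τ
      constructor
      · -- curve u t = z - t • v
        have hu : Tendsto (fun t : ℝ => z - t • v) (𝓝[>] (0:ℝ)) (𝓝 z) := by
          have ht0' : Tendsto (fun t : ℝ => t) (𝓝[>] (0:ℝ)) (𝓝 0) :=
            tendsto_id.mono_right nhdsWithin_le_nhds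
          have := (tendsto_const_nhds (x := z)).sub (ht0'.smul_const v)
          simpa using this
        refine le_clarkeDeriv_of_curve hε hK hu ?_
        filter_upwards [hev, htpos] with t ht htp
        have harg : z - t • v + t • v = z := by abel
        rw [harg, le_div_iff₀ htp]
        have h2 := ht.2
        simp only [hg_def] at h2
        rw [eminus t] at h2
        nlinarith
      · -- curve u t = z + t • v, direction -v
        have hu : Tendsto (fun t : ℝ => z + t • v) (𝓝[>] (0:ℝ)) (𝓝 z) := by
          have ht0' : Tendsto (fun t : ℝ => t) (𝓝[>] (0:ℝ)) (𝓝 0) :=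
            tendsto_id.mono_right nhdsWithin_le_nhds
          have := (tendsto_const_nhds (x := z)).add (ht0'.smul_const v)
          simpa using this
        refine le_clarkeDeriv_of_curve hε hK hu ?_
        filter_upwards [hev, htpos] with t ht htp
        have harg : z + t • v + t • (-v) = z := by rw [smul_neg]; abel
        rw [harg, le_div_iff₀ htp]
        have h1 := ht.1
        simp only [hg_def] at h1
        rw [eplus t] at h1
        nlinarith
    · -- local min at τ
      constructor
      · refine le_clarkeDeriv_of_curve hε hK (tendsto_const_nhds : Tendsto (fun _ : ℝ => z) _ _) ?_
        filter_upwards [hev, htpos] with t ht htp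
        rw [le_div_iff₀ htp]
        have h1 := ht.1
        simp only [hg_def] at h1
        rw [eplus t] at h1
        nlinarith
      · refine le_clarkeDeriv_of_curve hε hK (tendsto_const_nhds : Tendsto (fun _ : ℝ => z) _ _) ?_
        filter_upwards [hev, htpos] with t ht htp
        have harg : z + t • (-v) = z - t • v := by rw [smul_neg]; abel
        rw [harg, le_div_iff₀ htp]
        have h2 := ht.2
        simp only [hg_def] at h2
        rw [eminus t] at h2
        nlinarith
  obtain ⟨ξ, hξ_mem, hξv⟩ := exists_subgradient hε hK hv hmain.1 hmain.2
  exact ⟨τ, hτ, ξ, hξ_mem, hξv.symm⟩
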